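/- With G_{m,i}(0,…,0) (r zeros) defined as the r-fold convolution ∑_{l_1+···+l_r+i = m} ∏_{k=1}^{r} φ(l_k | m - l_1 - ··· - l_{k-1}), where φ(l|m) = y^l (μ;q)_l (y;q)_{m-l}/(μy;q)_m · [m choose l]_q, one has for 0 ≤ i ≤ m: G_{m,i}(0,…,0) = ∑_{j=i}^{m} (-1)^{i+j} q^{i(i-1)/2 + j(j+1-2m)/2} [m choose j]_q [j choose i]_q η_j^r, where η_j = (y;q)_j/(μy;q)_j. -/

import Mathlib

noncomputable def qPoch (z q : ℝ) (m : ℕ) : ℝ := ∏ j ∈ Finset.range m, (1 - z * q ^ j)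

noncomputable def qBinom (q : ℝ) (m l : ℕ) : ℝ :=
  if l ≤ m then qPoch q q m / (qPoch q q l * qPoch q q (m - l)) else 0

noncomputable def phi (q μ y : ℝ) (l m : ℕ) : ℝ :=
  y ^ l * qPoch μ q l * qPoch y q (m - l) / qPoch (μ * y) q m * qBinom q m l

noncomputable def eta (q μ y : ℝ) (j : ℕ) : ℝ := qPoch y q j / qPoch (μ * y) q j

lemma qPoch_pos {q z : ℝ} (hq0 : 0 < q) (hq1 : q < 1) (hz0 : 0 ≤ z) (hz1 : z < 1) (k : ℕ) :
    0 < qPoch z q k := by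
  apply Finset.prod_pos
  intro j _
  have h1 : q ^ j ≤ 1 := pow_le_one₀ hq0.le hq1.le
  nlinarith [pow_pos hq0 j]

lemma qPoch_ne {q z : ℝ} (hq0 : 0 < q) (hq1 : q < 1) (hz0 : 0 ≤ z) (hz1 : z < 1) (k : ℕ) :
    qPoch z q k ≠ 0 := (qPoch_pos hq0 hq1 hz0 hz1 k).ne'

lemma qPoch_succ (z q : ℝ) (m : ℕ) : qPoch z q (m+1) = qPoch z q m * (1 - z * q ^ m) :=
  Finset.prod_range_succ _ _

lemma qPoch_add (z q : ℝ) (a b : ℕ) : qPoch z q (a+b) = qPoch z q a * qPoch (z * q ^ a) q b := by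
  unfold qPoch
  rw [Finset.prod_range_add]
  congr 1
  apply Finset.prod_congr rfl
  intro j _
  rw [pow_add]; ring

lemma qBinom_of_le {q : ℝ} {m l : ℕ} (h : l ≤ m) :
    qBinom q m l = qPoch q q m / (qPoch q q l * qPoch q q (m - l)) := if_pos h

lemma qBinom_of_gt {q : ℝ} {m l : ℕ} (h : m < l) : qBinom q m l = 0 := if_neg (by omega)

lemma qBinom_zero {q : ℝ} (hq0 : 0 < q) (hq1 : q < 1) (m : ℕ) : qBinom q m 0 = 1 := by
  rw [qBinom_of_le (Nat.zero_le m)]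
  simp only [qPoch, Finset.range_zero, Finset.prod_empty, one_mul, Nat.sub_zero]
  exact div_self (qPoch_ne hq0 hq1 hq0.le hq1 m)

lemma qBinom_self {q : ℝ} (hq0 : 0 < q) (hq1 : q < 1) (m : ℕ) : qBinom q m m = 1 := by
  rw [qBinom_of_le le_rfl]
  simp only [qPoch, Nat.sub_self, Finset.range_zero, Finset.prod_empty, mul_one]
  exact div_self (qPoch_ne hq0 hq1 hq0.le hq1 m)

lemma qBinom_pascal {q : ℝ} (hq0 : 0 < q) (hq1 : q < 1) (n l : ℕ) :
    qBinom q (n+1) (l+1) = qBinom q n (l+1) + q ^ (n-l) * qBinom q n l := by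
  have hP : ∀ k, qPoch q q k ≠ 0 := qPoch_ne hq0 hq1 hq0.le hq1
  have hfac : ∀ k : ℕ, (1 - q * q ^ k) ≠ 0 := by
    intro k
    have h1 : q ^ k ≤ 1 := pow_le_one₀ hq0.le hq1.le
    have := pow_pos hq0 k
    nlinarith
  rcases le_or_gt (l+1) n with h | h
  · -- l + 1 ≤ n
    rw [qBinom_of_le (by omega), qBinom_of_le h, qBinom_of_le (by omega)]
    have e1 : n + 1 - (l+1) = (n - (l+1)) + 1 := by omega
    have e2 : n - l = (n - (l+1)) + 1 := by omega
    rw [e1, e2, qPoch_succ, qPoch_succ, qPoch_succ, pow_succ']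
    have key : 1 - q*q^n = (1 - q*q^(n-(l+1))) + (q*q^(n-(l+1))) * (1 - q*q^l) := by
      have h1' : (q*q^(n-(l+1))) * (q*q^l) = q*q^n := by
        rw [← pow_succ', ← pow_succ', ← pow_add, ← pow_succ']
        congr 1
        omega
      linear_combination h1'
    rw [key]
    field_simp [hP n, hP l, hP (n-(l+1)), hfac l, hfac (n-(l+1))]
  · rcases le_or_gt (l+1) (n+1) with h2 | h2
    · -- l = n
      have : l = n := by omega
      subst this
      rw [qBinom_self hq0 hq1, qBinom_of_gt (by omega), qBinom_self hq0 hq1]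
      simp
    · rw [qBinom_of_gt (by omega), qBinom_of_gt (by omega), qBinom_of_gt (by omega)]
      ring

lemma qBinom_tri {q : ℝ} (hq0 : 0 < q) (hq1 : q < 1) {l j m : ℕ} (hlj : l + j ≤ m) :
    qBinom q m l * qBinom q (m-l) j = qBinom q m j * qBinom q (m-j) l := by
  have hP : ∀ k, qPoch q q k ≠ 0 := qPoch_ne hq0 hq1 hq0.le hq1
  rw [qBinom_of_le (by omega), qBinom_of_le (by omega), qBinom_of_le (by omega),
    qBinom_of_le (by omega)]
  have e1 : m - l - j = m - (l+j) := by omega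
  have e2 : m - j - l = m - (l+j) := by omega
  rw [e1, e2, div_mul_div_comm, div_mul_div_comm, div_eq_div_iff]
  · ring
  · exact mul_ne_zero (mul_ne_zero (hP _) (hP _)) (mul_ne_zero (hP _) (hP _))
  · exact mul_ne_zero (mul_ne_zero (hP _) (hP _)) (mul_ne_zero (hP _) (hP _))

lemma tri_succ (s : ℕ) : (s+1)*s/2 = s*(s-1)/2 + s := by
  have hcd : (s+1)*s = s*(s-1) + 2*s := by
    cases s with
    | zero => simp
    | succ t => simp only [Nat.succ_sub_one]; ring
  rw [hcd, Nat.add_mul_div_left _ _ (by norm_num : (0:ℕ) < 2)]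

lemma euler_sum {q : ℝ} (hq0 : 0 < q) (hq1 : q < 1) (z : ℝ) (n : ℕ) :
    ∑ s ∈ Finset.range (n+1), (-1:ℝ)^s * q^(s*(s-1)/2) * z^s * qBinom q n s
      = qPoch z q n := by
  induction n generalizing z with
  | zero => simp [qBinom_self hq0 hq1, qPoch]
  | succ n ih =>
    rw [Finset.sum_range_succ']
    simp only [Nat.add_sub_cancel]
    have step : ∀ s ∈ Finset.range (n+1),
        (-1:ℝ)^(s+1) * q^((s+1)*s/2) * z^(s+1) * qBinom q (n+1) (s+1)
          = ((-1:ℝ)^(s+1) * q^((s+1)*s/2) * z^(s+1) * qBinom q n (s+1))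
            + (-(z*q^n)) * ((-1:ℝ)^s * q^(s*(s-1)/2) * z^s * qBinom q n s) := by
      intro s hs
      rw [qBinom_pascal hq0 hq1 n s]
      have hq' : q^((s+1)*s/2) = q^(s*(s-1)/2) * q^s := by rw [tri_succ, pow_add]
      have hqn : q^(n-s) * q^s = q^n := by
        rw [← pow_add]; congr 1
        simp only [Finset.mem_range] at hs
        omega
      rw [hq', pow_succ (-1:ℝ), pow_succ z]
      linear_combination (-(-1:ℝ)^s * q^(s*(s-1)/2) * z^s * z * qBinom q n s) * hqn
    rw [Finset.sum_congr rfl step, Finset.sum_add_distrib]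
    have hA : (∑ s ∈ Finset.range (n+1),
          (-1:ℝ)^(s+1) * q^((s+1)*s/2) * z^(s+1) * qBinom q n (s+1))
        + (-1:ℝ)^0 * q^(0*(0-1)/2) * z^0 * qBinom q n 0 = qPoch z q n := by
      have hA0 : ∑ s ∈ Finset.range (n+2),
          (-1:ℝ)^s * q^(s*(s-1)/2) * z^s * qBinom q n s = qPoch z q n := by
        rw [Finset.sum_range_succ, qBinom_of_gt (by omega)]
        simp [ih z]
      rw [Finset.sum_range_succ'] at hA0
      simp only [Nat.add_sub_cancel] at hA0
      exact hA0
    have hB : (∑ s ∈ Finset.range (n+1),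
          (-(z*q^n)) * ((-1:ℝ)^s * q^(s*(s-1)/2) * z^s * qBinom q n s))
        = -(z*q^n) * qPoch z q n := by
      rw [← Finset.mul_sum, ih z]
    rw [hB, qPoch_succ]
    have hz0 : qBinom q (n+1) 0 = qBinom q n 0 := by
      rw [qBinom_zero hq0 hq1, qBinom_zero hq0 hq1]
    rw [hz0]
    linarith [hA]

lemma rothe_sum {q : ℝ} (hq0 : 0 < q) (hq1 : q < 1) (a z : ℝ) (n : ℕ) :
    ∑ l ∈ Finset.range (n+1), z^l * qPoch a q l * qPoch z q (n-l) * qBinom q n l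
      = qPoch (a*z) q n := by
  induction n with
  | zero => simp [qBinom_self hq0 hq1, qPoch]
  | succ n ih =>
    rw [Finset.sum_range_succ']
    simp only [Nat.add_sub_add_right, Nat.sub_zero]
    have hstep : ∀ l ∈ Finset.range (n+1),
        z^(l+1) * qPoch a q (l+1) * qPoch z q (n-l) * qBinom q (n+1) (l+1)
          = (z^(l+1) * qPoch a q (l+1) * qPoch z q (n-l) * qBinom q n (l+1))
            + (z^l * qPoch a q l * qPoch z q (n-l) * qBinom q n l)
              * (z * q^(n-l) * (1 - a*q^l)) := by
      intro l _
      rw [qBinom_pascal hq0 hq1 n l, qPoch_succ a q l]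
      ring
    have hG : (∑ l ∈ Finset.range (n+1),
          z^(l+1) * qPoch a q (l+1) * qPoch z q (n-l) * qBinom q n (l+1))
        + z^0 * qPoch a q 0 * qPoch z q (n+1) * qBinom q n 0
        = ∑ l ∈ Finset.range (n+1),
            z^l * qPoch a q l * qPoch z q (n+1-l) * qBinom q n l := by
      have h1 : ∑ l ∈ Finset.range (n+2),
            z^l * qPoch a q l * qPoch z q (n+1-l) * qBinom q n l
          = ∑ l ∈ Finset.range (n+1),
            z^l * qPoch a q l * qPoch z q (n+1-l) * qBinom q n l := by
        rw [Finset.sum_range_succ, qBinom_of_gt (by omega)]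
        simp
      rw [Finset.sum_range_succ'] at h1
      simp only [Nat.add_sub_add_right, Nat.sub_zero] at h1
      exact h1
    have hmerge : ∀ l ∈ Finset.range (n+1),
        (z^l * qPoch a q l * qPoch z q (n+1-l) * qBinom q n l)
          + (z^l * qPoch a q l * qPoch z q (n-l) * qBinom q n l)
            * (z * q^(n-l) * (1 - a*q^l))
        = (1 - a*z*q^n) * (z^l * qPoch a q l * qPoch z q (n-l) * qBinom q n l) := by
      intro l hl
      simp only [Finset.mem_range] at hl
      have h1 : qPoch z q (n+1-l) = qPoch z q (n-l) * (1 - z*q^(n-l)) := by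
        rw [show n+1-l = (n-l)+1 by omega, qPoch_succ]
      have h2 : q^(n-l) * q^l = q^n := by rw [← pow_add]; congr 1; omega
      rw [h1]
      linear_combination (-(z^l * qPoch a q l * qPoch z q (n-l) * qBinom q n l) * a * z) * h2
    rw [Finset.sum_congr rfl hstep, Finset.sum_add_distrib,
      show qBinom q (n+1) 0 = qBinom q n 0 from by
        rw [qBinom_zero hq0 hq1, qBinom_zero hq0 hq1],
      add_right_comm, hG, ← Finset.sum_add_distrib, Finset.sum_congr rfl hmerge,
      ← Finset.mul_sum, ih, qPoch_succ]
    ring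

lemma lemD {q μ y : ℝ} (hq0 : 0 < q) (hq1 : q < 1) (hμ0 : 0 < μ) (hμ1 : μ < 1)
    (hy0 : 0 < y) (hy1 : y < 1) {j m : ℕ} (hj : j ≤ m) :
    ∑ l ∈ Finset.range (m-j+1), phi q μ y l m * q^(j*l) * qBinom q (m-l) j
      = qBinom q m j * eta q μ y j := by
  set n := m - j with hn
  have hqj1 : q ^ j ≤ 1 := pow_le_one₀ hq0.le hq1.le
  have hqj0 : 0 < q ^ j := pow_pos hq0 j
  have hμy0 : (0:ℝ) ≤ μ * y := by positivity
  have hμy1 : μ * y < 1 := by nlinarith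
  have hyq0 : (0:ℝ) ≤ y * q ^ j := by positivity
  have hyq1 : y * q ^ j < 1 := by nlinarith
  have hμyq0 : (0:ℝ) ≤ μ * y * q ^ j := by positivity
  have hμyq1 : μ * y * q ^ j < 1 := by nlinarith
  have key : ∀ l ∈ Finset.range (n+1),
      phi q μ y l m * q^(j*l) * qBinom q (m-l) j
        = ((y*q^j)^l * qPoch μ q l * qPoch (y*q^j) q (n-l) * qBinom q n l)
          * (qBinom q m j * qPoch y q j /
              (qPoch (μ*y) q j * qPoch (μ*y*q^j) q n)) := by
    intro l hl
    simp only [Finset.mem_range] at hl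
    have hl' : l ≤ n := by omega
    have htri : qBinom q m l * qBinom q (m-l) j = qBinom q m j * qBinom q n l := by
      have := qBinom_tri hq0 hq1 (show l + j ≤ m by omega)
      rwa [show m - j = n from rfl] at this
    have hy' : qPoch y q (m-l) = qPoch y q j * qPoch (y*q^j) q (n-l) := by
      rw [show m - l = j + (n-l) from by omega, qPoch_add]
    have hμy' : qPoch (μ*y) q m = qPoch (μ*y) q j * qPoch (μ*y*q^j) q n := by
      rw [show m = j + n from by omega, qPoch_add]
    have hyq : y^l * q^(j*l) = (y*q^j)^l := by rw [mul_pow, pow_mul]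
    unfold phi
    rw [hy', hμy']
    linear_combination
      ((qPoch μ q l * (qPoch y q j * qPoch (y*q^j) q (n-l)) /
          (qPoch (μ*y) q j * qPoch (μ*y*q^j) q n)) * (y^l * q^(j*l))) * htri
      + (qPoch μ q l * (qPoch y q j * qPoch (y*q^j) q (n-l)) /
          (qPoch (μ*y) q j * qPoch (μ*y*q^j) q n) * (qBinom q m j * qBinom q n l)) * hyq
  rw [Finset.sum_congr rfl key, ← Finset.sum_mul, rothe_sum hq0 hq1 μ (y*q^j) n,
    show μ*(y*q^j) = μ*y*q^j from by ring]
  unfold eta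
  have h1 := qPoch_ne hq0 hq1 hμy0 hμy1 j
  have h2 := qPoch_ne hq0 hq1 hμyq0 hμyq1 n
  field_simp

lemma tcast2 (k : ℕ) : 2*((k*(k+1)/2 : ℕ):ℤ) = (k:ℤ)*((k:ℤ)+1) := by
  have h : k*(k+1)/2*2 = k*(k+1) :=
    Nat.div_mul_cancel (Even.two_dvd (Nat.even_mul_succ_self k))
  have h2 : ((k*(k+1)/2 : ℕ):ℤ)*2 = (k:ℤ)*((k:ℤ)+1) := by exact_mod_cast h
  linarith

lemma tcast1 (k : ℕ) : 2*((k*(k-1)/2 : ℕ):ℤ) = (k:ℤ)*((k:ℤ)-1) := by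
  rcases k with _ | t
  · simp
  · have h2 : (t+1)*((t+1)-1) = t*(t+1) := by
      simp [Nat.succ_sub_one]; ring
    rw [h2]
    have h : t*(t+1)/2*2 = t*(t+1) :=
      Nat.div_mul_cancel (Even.two_dvd (Nat.even_mul_succ_self t))
    have h3 : ((t*(t+1)/2 : ℕ):ℤ)*2 = (t:ℤ)*((t:ℤ)+1) := by exact_mod_cast h
    push_cast
    linarith

lemma qBinom_tri2 {q : ℝ} (hq0 : 0 < q) (hq1 : q < 1) {i j m : ℕ} (hij : i ≤ j) (hjm : j ≤ m) :
    qBinom q m j * qBinom q j i = qBinom q m i * qBinom q (m-i) (j-i) := by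
  have hP : ∀ k, qPoch q q k ≠ 0 := qPoch_ne hq0 hq1 hq0.le hq1
  rw [qBinom_of_le hjm, qBinom_of_le hij, qBinom_of_le (by omega),
    qBinom_of_le (by omega)]
  rw [show m - i - (j - i) = m - j from by omega]
  rw [div_mul_div_comm, div_mul_div_comm, div_eq_div_iff]
  · ring
  · exact mul_ne_zero (mul_ne_zero (hP _) (hP _)) (mul_ne_zero (hP _) (hP _))
  · exact mul_ne_zero (mul_ne_zero (hP _) (hP _)) (mul_ne_zero (hP _) (hP _))

lemma base_case {q : ℝ} (hq0 : 0 < q) (hq1 : q < 1) {i m : ℕ} (hi : i ≤ m) :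
    ∑ j ∈ Finset.Icc i m, (-1:ℝ)^(i+j) *
        q ^ (((i * (i - 1) / 2 + j * (j + 1) / 2 : ℕ) : ℤ) - (j * m : ℤ)) *
        qBinom q m j * qBinom q j i
      = if i = m then 1 else 0 := by
  have hqne : q ≠ 0 := hq0.ne'
  rw [show Finset.Icc i m = Finset.Ico i (m+1) from by rw [Finset.Ico_add_one_right_eq_Icc],
    Finset.sum_Ico_eq_sum_range]
  have key : ∀ s ∈ Finset.range (m+1-i),
      (-1:ℝ)^(i+(i+s)) *
        q ^ (((i * (i - 1) / 2 + (i+s) * ((i+s) + 1) / 2 : ℕ) : ℤ) - (((i+s):ℕ):ℤ) * (m:ℤ)) *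
        qBinom q m (i+s) * qBinom q (i+s) i
      = (qBinom q m i * q ^ ((i:ℤ)*(i:ℤ) - (i:ℤ)*(m:ℤ))) *
          ((-1:ℝ)^s * q^(s*(s-1)/2) * (q ^ ((i:ℤ) + 1 - (m:ℤ)))^s * qBinom q (m-i) s) := by
    intro s hs
    have hsgn : (-1:ℝ)^(i+(i+s)) = (-1:ℝ)^s := by
      rw [show i+(i+s) = 2*i + s from by ring, pow_add, pow_mul]
      norm_num
    have htri : qBinom q m (i+s) * qBinom q (i+s) i
        = qBinom q m i * qBinom q (m-i) s := by
      simp only [Finset.mem_range] at hs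
      rw [qBinom_tri2 hq0 hq1 (Nat.le_add_right i s) (by omega),
        Nat.add_sub_cancel_left]
    have hexp : (((i * (i - 1) / 2 + (i+s) * ((i+s) + 1) / 2 : ℕ) : ℤ) - (((i+s):ℕ):ℤ) * (m:ℤ))
        = ((i:ℤ)*(i:ℤ) - (i:ℤ)*(m:ℤ)) + ((s*(s-1)/2 : ℕ) : ℤ)
          + ((i:ℤ) + 1 - (m:ℤ)) * (s:ℤ) := by
      apply mul_left_cancel₀ (by norm_num : (2:ℤ) ≠ 0)
      have c1 := tcast1 i
      have c2 := tcast2 (i+s)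
      have c3 := tcast1 s
      push_cast at c1 c2 c3 ⊢
      linear_combination c1 + c2 - c3
    rw [hsgn, hexp, zpow_add₀ hqne, zpow_add₀ hqne, zpow_mul]
    simp only [zpow_natCast]
    linear_combination (q ^ ((i:ℤ)*(i:ℤ) - (i:ℤ)*(m:ℤ)) * q^(s*(s-1)/2)
      * (q ^ ((i:ℤ) + 1 - (m:ℤ)))^s * (-1:ℝ)^s) * htri
  rw [Finset.sum_congr rfl key, ← Finset.mul_sum]
  have heuler := euler_sum hq0 hq1 (q ^ ((i:ℤ) + 1 - (m:ℤ))) (m-i)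
  rw [show m+1-i = (m-i)+1 from by omega, heuler]
  rcases eq_or_lt_of_le hi with h | h
  · subst h
    rw [if_pos rfl, Nat.sub_self]
    simp [qPoch, qBinom_self hq0 hq1]
  · rw [if_neg (by omega)]
    have hzero : qPoch (q ^ ((i:ℤ) + 1 - (m:ℤ))) q (m-i) = 0 := by
      apply Finset.prod_eq_zero (Finset.mem_range.mpr (show m-i-1 < m-i by omega))
      rw [← zpow_natCast q (m-i-1), ← zpow_add₀ hqne]
      rw [show (i:ℤ) + 1 - (m:ℤ) + ((m-i-1 : ℕ):ℤ) = 0 from by push_cast; omega]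
      simp
    rw [hzero]
    ring

lemma sum_antidiagonalTuple_succ (r n : ℕ) (f : (Fin (r+1) → ℕ) → ℝ) :
    ∑ t ∈ Finset.Nat.antidiagonalTuple (r+1) n, f t
      = ∑ p ∈ Finset.HasAntidiagonal.antidiagonal n,
          ∑ s ∈ Finset.Nat.antidiagonalTuple r p.2, f (Fin.cons p.1 s) := by
  rw [Finset.sum_sigma']
  refine (Finset.sum_nbij' (fun t => (⟨(t 0, ∑ i, Fin.tail t i), Fin.tail t⟩ :
      (Σ p : ℕ × ℕ, Fin r → ℕ))) (fun σ => Fin.cons σ.1.1 σ.2) ?_ ?_ ?_ ?_ ?_)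
  · intro t ht
    rw [Finset.Nat.mem_antidiagonalTuple] at ht
    refine Finset.mem_sigma.mpr ⟨Finset.HasAntidiagonal.mem_antidiagonal.mpr ?_,
      Finset.Nat.mem_antidiagonalTuple.mpr rfl⟩
    rw [← ht, Fin.sum_univ_succ]
    rfl
  · intro σ hσ
    rw [Finset.mem_sigma] at hσ
    obtain ⟨h1, h2⟩ := hσ
    rw [Finset.HasAntidiagonal.mem_antidiagonal] at h1
    rw [Finset.Nat.mem_antidiagonalTuple] at h2
    rw [Finset.Nat.mem_antidiagonalTuple, Fin.sum_cons, h2, h1]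
  · intro t ht
    exact Fin.cons_self_tail t
  · intro σ hσ
    rw [Finset.mem_sigma] at hσ
    obtain ⟨h1, h2⟩ := hσ
    rw [Finset.Nat.mem_antidiagonalTuple] at h2
    refine Sigma.ext ?_ (by rw [heq_iff_eq]; exact funext fun i => by simp [Fin.tail_cons])
    simp [Fin.tail_cons, h2]
  · intro t ht
    rw [Fin.cons_self_tail]

noncomputable def Gsum (q μ y : ℝ) (m r n : ℕ) : ℝ :=
  ∑ t ∈ Finset.Nat.antidiagonalTuple r n,
    ∏ k : Fin r, phi q μ y (t k)
      (m - ∑ k' ∈ Finset.univ.filter (fun k' : Fin r => k' < k), t k')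

lemma filter_sum_cons_zero (r : ℕ) (l : ℕ) (s : Fin r → ℕ) :
    ∑ k' ∈ Finset.univ.filter (fun k' : Fin (r+1) => k' < (0 : Fin (r+1))),
      (Fin.cons l s : Fin (r+1) → ℕ) k' = 0 := by
  have : Finset.univ.filter (fun k' : Fin (r+1) => k' < (0 : Fin (r+1))) = ∅ := by
    ext x; simp [Fin.not_lt_zero]
  rw [this, Finset.sum_empty]

lemma filter_sum_cons_succ (r : ℕ) (l : ℕ) (s : Fin r → ℕ) (k : Fin r) :
    ∑ k' ∈ Finset.univ.filter (fun k' : Fin (r+1) => k' < Fin.succ k),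
      (Fin.cons l s : Fin (r+1) → ℕ) k'
      = l + ∑ k' ∈ Finset.univ.filter (fun k' : Fin r => k' < k), s k' := by
  rw [Finset.sum_filter, Finset.sum_filter, Fin.sum_univ_succ]
  simp [Fin.succ_pos, Fin.succ_lt_succ_iff]

lemma Gsum_succ (q μ y : ℝ) (m r n : ℕ) :
    Gsum q μ y m (r+1) n
      = ∑ p ∈ Finset.HasAntidiagonal.antidiagonal n, phi q μ y p.1 m * Gsum q μ y (m - p.1) r p.2 := by
  rw [Gsum, sum_antidiagonalTuple_succ]
  apply Finset.sum_congr rfl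
  intro p _
  rw [Gsum, Finset.mul_sum]
  apply Finset.sum_congr rfl
  intro s _
  rw [Fin.prod_univ_succ]
  congr 1
  · rw [Fin.cons_zero, filter_sum_cons_zero, Nat.sub_zero]
  · apply Finset.prod_congr rfl
    intro k _
    rw [Fin.cons_succ, filter_sum_cons_succ, Nat.sub_sub]

lemma main_aux (q μ y : ℝ) (hq0 : 0 < q) (hq1 : q < 1) (hμ0 : 0 < μ) (hμ1 : μ < 1)
    (hy0 : 0 < y) (hy1 : y < 1) (i : ℕ) :
    ∀ r m, i ≤ m →
      Gsum q μ y m r (m - i)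
        = ∑ j ∈ Finset.Icc i m, (-1:ℝ)^(i+j) *
            q ^ (((i * (i - 1) / 2 + j * (j + 1) / 2 : ℕ) : ℤ) - (j * m : ℤ)) *
            qBinom q m j * qBinom q j i * (eta q μ y j)^r := by
  have hqne : q ≠ 0 := hq0.ne'
  intro r
  induction r with
  | zero =>
    intro m hm
    simp only [pow_zero, mul_one]
    rw [base_case hq0 hq1 hm]
    rcases Nat.eq_or_lt_of_le hm with h | h
    · rw [if_pos h, Gsum, h, Nat.sub_self, Finset.Nat.antidiagonalTuple_zero_zero]
      simp
    · rw [if_neg (by omega), Gsum,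
        show m - i = (m-i-1)+1 from by omega, Finset.Nat.antidiagonalTuple_zero_succ]
      simp
  | succ r ih =>
    intro m hm
    rw [Gsum_succ, Finset.Nat.sum_antidiagonal_eq_sum_range_succ_mk]
    have hterm : ∀ l ∈ Finset.range (m-i+1),
        phi q μ y l m * Gsum q μ y (m-l) r ((m-i)-l)
          = ∑ j ∈ Finset.Icc i m, phi q μ y l m *
              ((-1:ℝ)^(i+j) *
                q ^ (((i * (i - 1) / 2 + j * (j + 1) / 2 : ℕ) : ℤ) - ((j:ℤ) * ((m-l : ℕ) : ℤ))) *
                qBinom q (m-l) j * qBinom q j i * (eta q μ y j)^r) := by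
      intro l hl
      simp only [Finset.mem_range] at hl
      rw [show (m-i)-l = (m-l)-i from by omega, ih (m-l) (by omega), Finset.mul_sum]
      apply Finset.sum_subset (Finset.Icc_subset_Icc_right (Nat.sub_le m l))
      intro j hj hj'
      simp only [Finset.mem_Icc] at hj hj'
      rw [qBinom_of_gt (by omega)]
      ring
    rw [Finset.sum_congr rfl hterm]
    rw [Finset.sum_comm (s := Finset.range (m-i+1)) (t := Finset.Icc i m)]
    apply Finset.sum_congr rfl
    intro j hj
    simp only [Finset.mem_Icc] at hj
    rw [← Finset.sum_subset (Finset.range_subset_range.mpr (show m-j+1 ≤ m-i+1 by omega))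
      (fun l hl hl' => by
        simp only [Finset.mem_range] at hl hl'
        rw [qBinom_of_gt (show m - l < j by omega)]
        ring)]
    have hsplit : ∀ l ∈ Finset.range (m-j+1),
        phi q μ y l m *
            ((-1:ℝ)^(i+j) *
              q ^ (((i * (i - 1) / 2 + j * (j + 1) / 2 : ℕ) : ℤ) - ((j:ℤ) * ((m-l : ℕ) : ℤ))) *
              qBinom q (m-l) j * qBinom q j i * (eta q μ y j)^r)
          = ((-1:ℝ)^(i+j) *
              q ^ (((i * (i - 1) / 2 + j * (j + 1) / 2 : ℕ) : ℤ) - (j * m : ℤ)) *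
              qBinom q j i * (eta q μ y j)^r)
            * (phi q μ y l m * q^(j*l) * qBinom q (m-l) j) := by
      intro l hl
      simp only [Finset.mem_range] at hl
      have hq' : q ^ (((i * (i - 1) / 2 + j * (j + 1) / 2 : ℕ) : ℤ) - ((j:ℤ) * ((m-l : ℕ) : ℤ)))
          = q ^ (((i * (i - 1) / 2 + j * (j + 1) / 2 : ℕ) : ℤ) - (j * m : ℤ)) * q^(j*l) := by
        rw [← zpow_natCast q (j*l), ← zpow_add₀ hqne]
        congr 1
        have : ((m-l : ℕ):ℤ) = (m:ℤ) - (l:ℤ) := by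
          have : l ≤ m := by omega
          push_cast [this]
          ring
        push_cast [this]
        ring
      rw [hq']
      ring
    rw [Finset.sum_congr rfl hsplit, ← Finset.mul_sum,
      lemD hq0 hq1 hμ0 hμ1 hy0 hy1 (show j ≤ m by omega), pow_succ]
    ring

theorem G_zero_defects (q μ y : ℝ) (m i r : ℕ) (hi : i ≤ m)
    (hq0 : 0 < q) (hq1 : q < 1) (hμ0 : 0 < μ) (hμ1 : μ < 1) (hy0 : 0 < y) (hy1 : y < 1) :
    (∑ t ∈ Finset.Nat.antidiagonalTuple r (m - i),
        ∏ k : Fin r, phi q μ y (t k)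
          (m - ∑ k' ∈ Finset.univ.filter (fun k' : Fin r => k' < k), t k'))
      = ∑ j ∈ Finset.Icc i m,
          (-1 : ℝ) ^ (i + j) *
            q ^ (((i * (i - 1) / 2 + j * (j + 1) / 2 : ℕ) : ℤ) - (j * m : ℤ)) *
            qBinom q m j * qBinom q j i * (eta q μ y j) ^ r := by
  exact main_aux q μ y hq0 hq1 hμ0 hμ1 hy0 hy1 i r m hi
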